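/- Let a ∈ ℝˢ and ℓ ≥ 1, and define ω : (ℝˢ)^ℓ → ℝ by ω(X) := min_{1 ≤ j ≤ ℓ} ‖x_j − a‖² for X = (x_1,…,x_ℓ). Fix X ∈ (ℝˢ)^ℓ and let j₀ be any index attaining the minimum, i.e., ω(X) = ‖x_{j₀} − a‖². Define ξ ∈ (ℝˢ)^ℓ by ξ_{j₀} := 2(x_{j₀} − a) and ξ_j := 0 for j ≠ j₀. Then for all Y = (y_1,…,y_ℓ) ∈ (ℝˢ)^ℓ, ω(Y) ≤ ω(X) + ⟨ξ, Y − X⟩ + ‖Y − X‖², where ⟨·,·⟩ and ‖·‖ are the inner product and norm of the product Euclidean space (ℝˢ)^ℓ. In particular, ω is 1-upper-C². -/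

import Mathlib

open scoped BigOperators RealInnerProductSpace

/-- The per-data-point clustering objective: squared distance from the data point `a` to its
nearest centroid among `X = (x_1, …, x_ℓ)`.  The space of centroid collections is the
product Euclidean space `(ℝˢ)^ℓ` (with the `ℓ²` product norm). -/
noncomputable def clusterObj {s ℓ : ℕ} (a : EuclideanSpace ℝ (Fin s))
    (X : PiLp 2 fun _ : Fin ℓ => EuclideanSpace ℝ (Fin s)) : ℝ :=
  ⨅ j : Fin ℓ, ‖X j - a‖ ^ 2

/-- The clustering objective `ω` is `1`-upper-`C²`: at any `X`, with `j₀` an index attaining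
the minimum, the vector `ξ` having `2(x_{j₀} − a)` in position `j₀` and `0` elsewhere
satisfies the `1`-descent inequality `ω(Y) ≤ ω(X) + ⟪ξ, Y − X⟫ + ‖Y − X‖²` for all `Y`. -/
theorem clusterObj_descent {s ℓ : ℕ} (hℓ : 1 ≤ ℓ) (a : EuclideanSpace ℝ (Fin s))
    (X : PiLp 2 fun _ : Fin ℓ => EuclideanSpace ℝ (Fin s))
    (j₀ : Fin ℓ) (hj₀ : clusterObj a X = ‖X j₀ - a‖ ^ 2)
    (ξ : PiLp 2 fun _ : Fin ℓ => EuclideanSpace ℝ (Fin s))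
    (hξ : ξ = fun j => if j = j₀ then (2 : ℝ) • (X j₀ - a) else 0) :
    ∀ Y : PiLp 2 fun _ : Fin ℓ => EuclideanSpace ℝ (Fin s),
      clusterObj a Y ≤ clusterObj a X + ⟪ξ, Y - X⟫ + ‖Y - X‖ ^ 2 := by
  intro Y
  have h1 : clusterObj a Y ≤ ‖Y j₀ - a‖ ^ 2 := by
    apply ciInf_le
    exact ⟨0, fun x ⟨j, hj⟩ => hj ▸ sq_nonneg _⟩
  have hinner : ⟪ξ, Y - X⟫ = 2 * ⟪X j₀ - a, Y j₀ - X j₀⟫ := by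
    rw [PiLp.inner_apply, hξ]
    rw [Finset.sum_eq_single j₀]
    · simp [real_inner_smul_left, PiLp.inner_apply, Finset.mul_sum, mul_assoc]
      exact Finset.sum_congr rfl fun i _ => by ring
    · intro b _ hb; simp [hb]
    · simp
  have hnorm : ‖Y j₀ - X j₀‖ ^ 2 ≤ ‖Y - X‖ ^ 2 := by
    have h2 : (Y - X) j₀ = Y j₀ - X j₀ := rfl
    conv_rhs => rw [PiLp.norm_sq_eq_of_L2]
    rw [← h2]
    exact Finset.single_le_sum (f := fun j => ‖(Y - X) j‖ ^ 2)
      (fun j _ => sq_nonneg _) (Finset.mem_univ j₀)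
  have key : ‖Y j₀ - a‖ ^ 2 =
      ‖X j₀ - a‖ ^ 2 + 2 * ⟪X j₀ - a, Y j₀ - X j₀⟫ + ‖Y j₀ - X j₀‖ ^ 2 := by
    have : Y j₀ - a = (X j₀ - a) + (Y j₀ - X j₀) := by abel
    rw [this, norm_add_sq_real]
  calc clusterObj a Y ≤ ‖Y j₀ - a‖ ^ 2 := h1
    _ = ‖X j₀ - a‖ ^ 2 + 2 * ⟪X j₀ - a, Y j₀ - X j₀⟫ + ‖Y j₀ - X j₀‖ ^ 2 := key
    _ ≤ clusterObj a X + ⟪ξ, Y - X⟫ + ‖Y - X‖ ^ 2 := by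
        rw [hj₀, hinner]; linarith
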